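/- Let G be a strongly regular graph with parameters (19, 6, 1, 2), let {a, b, c} be a triangle in G, and let W be the set of vertices not adjacent to any of a, b, c and distinct from a, b, c. Then no two vertices of W are adjacent, i.e., the induced subgraph of G on W has no edges. -/
import Mathlib

open Finset

/-- The unique common neighbor of two adjacent vertices in a graph with λ = 1. -/
lemma srg_common_eq {V : Type} [Fintype V] [DecidableEq V] {G : SimpleGraph V}
    [DecidableRel G.Adj] (h : G.IsSRGWith 19 6 1 2) {u v x y : V}
    (huv : G.Adj u v) (hx : x ∈ G.commonNeighbors u v) (hy : y ∈ G.commonNeighbors u v) :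
    x = y := by
  have hcard : Fintype.card (G.commonNeighbors u v) = 1 := h.of_adj u v huv
  rw [← Set.toFinset_card] at hcard
  have := Finset.card_eq_one.mp hcard
  obtain ⟨z, hz⟩ := this
  have hx' : x ∈ (G.commonNeighbors u v).toFinset := Set.mem_toFinset.mpr hx
  have hy' : y ∈ (G.commonNeighbors u v).toFinset := Set.mem_toFinset.mpr hy
  rw [hz, Finset.mem_singleton] at hx' hy'
  rw [hx', hy']

/-- For a triangle {a,b,c} in an srg(19,6,1,2), the set W of vertices distinct from and
non-adjacent to all of a, b, c induces an edgeless subgraph. -/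
theorem srg_19_6_1_2_W_independent
    {V : Type} [Fintype V] [DecidableEq V] (G : SimpleGraph V) [DecidableRel G.Adj]
    (h : G.IsSRGWith 19 6 1 2) (a b c : V)
    (hab : G.Adj a b) (hac : G.Adj a c) (hbc : G.Adj b c)
    (W : Finset V)
    (hW : W = Finset.univ.filter
      (fun v => ¬G.Adj a v ∧ ¬G.Adj b v ∧ ¬G.Adj c v ∧ v ≠ a ∧ v ≠ b ∧ v ≠ c)) :
    ∀ w₁ ∈ W, ∀ w₂ ∈ W, ¬ G.Adj w₁ w₂ := by
  subst hW
  intro w₁ hw₁ w₂ hw₂ hadj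
  simp only [Finset.mem_filter, Finset.mem_univ, true_and] at hw₁ hw₂
  obtain ⟨ha₁, hb₁, hc₁, hna₁, hnb₁, hnc₁⟩ := hw₁
  obtain ⟨ha₂, hb₂, hc₂, _, _, _⟩ := hw₂
  -- The common-neighbor finsets of w₁ with a, b, c
  set Sa := (G.commonNeighbors a w₁).toFinset with hSa
  set Sb := (G.commonNeighbors b w₁).toFinset with hSb
  set Sc := (G.commonNeighbors c w₁).toFinset with hSc
  have cardSa : Sa.card = 2 := by
    rw [hSa, Set.toFinset_card]; exact h.of_not_adj (fun e => hna₁ e.symm) ha₁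
  have cardSb : Sb.card = 2 := by
    rw [hSb, Set.toFinset_card]; exact h.of_not_adj (fun e => hnb₁ e.symm) hb₁
  have cardSc : Sc.card = 2 := by
    rw [hSc, Set.toFinset_card]; exact h.of_not_adj (fun e => hnc₁ e.symm) hc₁
  -- disjointness
  have memS : ∀ (u : V) (x : V), x ∈ (G.commonNeighbors u w₁).toFinset ↔
      G.Adj u x ∧ G.Adj w₁ x := by
    intro u x
    rw [Set.mem_toFinset]
    exact Iff.rfl
  have disj_ab : Disjoint Sa Sb := by
    rw [Finset.disjoint_left]
    intro x hxA hxB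
    rw [memS] at hxA hxB
    have hxc : x = c := srg_common_eq h hab ⟨hxA.1, hxB.1⟩
      ⟨hac, hbc⟩
    exact hc₁ (hxc ▸ hxA.2).symm
  have disj_ac : Disjoint Sa Sc := by
    rw [Finset.disjoint_left]
    intro x hxA hxC
    rw [memS] at hxA hxC
    have hxb : x = b := srg_common_eq h hac ⟨hxA.1, hxC.1⟩ ⟨hab, hbc.symm⟩
    exact hb₁ (hxb ▸ hxA.2).symm
  have disj_bc : Disjoint Sb Sc := by
    rw [Finset.disjoint_left]
    intro x hxB hxC
    rw [memS] at hxB hxC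
    have hxa : x = a := srg_common_eq h hbc ⟨hxB.1, hxC.1⟩ ⟨hab.symm, hac.symm⟩
    exact ha₁ (hxa ▸ hxB.2).symm
  -- union
  have hsub : Sa ∪ Sb ∪ Sc ⊆ G.neighborFinset w₁ := by
    intro x hx
    rw [SimpleGraph.mem_neighborFinset]
    rcases Finset.mem_union.mp hx with hx' | hx'
    · rcases Finset.mem_union.mp hx' with hx'' | hx''
      · exact ((memS a x).mp hx'').2
      · exact ((memS b x).mp hx'').2
    · exact ((memS c x).mp hx').2
  have cardU : (Sa ∪ Sb ∪ Sc).card = 6 := by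
    rw [Finset.card_union_of_disjoint, Finset.card_union_of_disjoint disj_ab,
      cardSa, cardSb, cardSc]
    rw [Finset.disjoint_union_left]
    exact ⟨disj_ac, disj_bc⟩
  have cardN : (G.neighborFinset w₁).card = 6 := by
    rw [SimpleGraph.card_neighborFinset_eq_degree]
    exact h.regular w₁
  have hEq : Sa ∪ Sb ∪ Sc = G.neighborFinset w₁ :=
    Finset.eq_of_subset_of_card_le hsub (by rw [cardU, cardN])
  -- w₂ is a neighbor of w₁, hence in the union, contradiction
  have hw₂mem : w₂ ∈ G.neighborFinset w₁ := (SimpleGraph.mem_neighborFinset _ _ _).mpr hadj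
  rw [← hEq] at hw₂mem
  rcases Finset.mem_union.mp hw₂mem with hx' | hx'
  · rcases Finset.mem_union.mp hx' with hx'' | hx''
    · exact ha₂ ((memS a w₂).mp hx'').1
    · exact hb₂ ((memS b w₂).mp hx'').1
  · exact hc₂ ((memS c w₂).mp hx').1
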